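/- Let q be a prime and m a positive integer. Every sequence S over the cyclic group C_{q^m} contains at least ⌊k(S)⌋ pairwise disjoint nonempty zero-sum subsequences; in particular, every sequence S over C_{q^m} with k(S) ≥ 1 has a nonempty zero-sum subsequence T with k(T) ≤ 1. -/

import Mathlib

/-- The cross number `k(S)` of a sequence (finite multiset) `S` over an additive group:
the sum, with multiplicity, of the reciprocals of the orders of its elements. -/
noncomputable def crossNum {G : Type*} [AddCommGroup G] (S : Multiset G) : ℝ :=
  (S.map fun g => ((addOrderOf g : ℝ))⁻¹).sum

/-- `S` is zero-sum free: no nonempty sub-multiset of `S` has sum `0`. -/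
def IsZeroSumFree {G : Type*} [AddCommGroup G] (S : Multiset G) : Prop :=
  ∀ T : Multiset G, T ≤ S → T ≠ 0 → T.sum ≠ 0

/-- The little cross number `k(G)`: the maximal cross number of a zero-sum free
sequence over `G`. -/
noncomputable def littleK (G : Type*) [AddCommGroup G] : ℝ :=
  sSup {x : ℝ | ∃ S : Multiset G, IsZeroSumFree S ∧ crossNum S = x}

namespace ZSFAux

open Multiset

/-- weight of an element: `gcd(N, val g)`, i.e. `N / addOrderOf g`. -/
def w (N : ℕ) (g : ZMod N) : ℕ := N.gcd g.val

/-- weight of a sequence. -/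
def W (N : ℕ) (S : Multiset (ZMod N)) : ℕ := (S.map (w N)).sum

variable {N : ℕ}

lemma w_dvd (g : ZMod N) : w N g ∣ N := Nat.gcd_dvd_left _ _

lemma w_pos [NeZero N] (g : ZMod N) : 0 < w N g :=
  Nat.gcd_pos_of_pos_left _ (Nat.pos_of_ne_zero (NeZero.ne N))

lemma dvd_w_iff {d : ℕ} (hd : d ∣ N) (g : ZMod N) : d ∣ w N g ↔ d ∣ g.val :=
  ⟨fun h => h.trans (Nat.gcd_dvd_right _ _), fun h => Nat.dvd_gcd hd h⟩

lemma W_add (A B : Multiset (ZMod N)) : W N (A + B) = W N A + W N B := by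
  simp [W]

lemma W_cons (g : ZMod N) (A : Multiset (ZMod N)) : W N (g ::ₘ A) = w N g + W N A := by
  simp [W]

lemma W_le_of_le {A B : Multiset (ZMod N)} (h : A ≤ B) : W N A ≤ W N B := by
  obtain ⟨C, rfl⟩ := Multiset.le_iff_exists_add.mp h
  rw [W_add]; exact Nat.le_add_right _ _

lemma crossNum_eq [NeZero N] (S : Multiset (ZMod N)) :
    crossNum S = (W N S : ℝ) / N := by
  have hN : (0:ℝ) < N := by
    exact_mod_cast Nat.pos_of_ne_zero (NeZero.ne N)
  induction S using Multiset.induction with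
  | empty => simp [crossNum, W]
  | cons g S ih =>
    have hg : (addOrderOf g : ℝ)⁻¹ = (w N g : ℝ) / N := by
      have h1 : addOrderOf g = N / w N g := by
        conv_lhs => rw [← ZMod.natCast_zmod_val g]
        rw [ZMod.addOrderOf_coe _ (NeZero.ne N)]; rfl
      have h2 : (N / w N g : ℕ) = (N : ℝ) / (w N g : ℝ) := by
        rw [Nat.cast_div (w_dvd g)]
        exact_mod_cast (w_pos g).ne'
      rw [h1, h2, inv_div]
    simp only [crossNum, Multiset.map_cons, Multiset.sum_cons, W_cons] at *
    rw [hg, ih]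
    push_cast
    ring

lemma davenport {A : Type*} (q : ℕ) (hq : 0 < q) (L : List A) (hL : L.length = q)
    (phi : A → ZMod q) :
    ∃ U : List A, U.Sublist L ∧ U ≠ [] ∧ (U.map phi).sum = 0 := by
  haveI : NeZero q := ⟨hq.ne'⟩
  set M : List (ZMod q) := L.map phi with hM
  have hcard : Fintype.card (ZMod q) < Fintype.card (Fin (q + 1)) := by
    rw [ZMod.card, Fintype.card_fin]; omega
  obtain ⟨i, j, hne, heq⟩ :=
    Fintype.exists_ne_map_eq_of_card_lt (fun i : Fin (q+1) => (M.take i).sum) hcard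
  wlog hij : (i : ℕ) < (j : ℕ) generalizing i j
  · exact this j i hne.symm heq.symm (by omega)
  refine ⟨(L.drop i).take (j - i), ?_, ?_, ?_⟩
  · exact ((L.drop (i:ℕ)).take_sublist _).trans (L.drop_sublist _)
  · have : ((L.drop (i:ℕ)).take ((j:ℕ) - i)).length = min ((j:ℕ) - i) (L.length - i) := by
      simp
    intro hnil
    rw [hnil] at this
    simp only [List.length_nil] at this
    omega
  · have hsplit : M.take (j:ℕ) = M.take (i:ℕ) ++ (M.drop (i:ℕ)).take ((j:ℕ) - (i:ℕ)) := by
      rw [← List.take_add]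
      congr 1
      omega
    have : (M.take (j:ℕ)).sum = (M.take (i:ℕ)).sum + ((M.drop (i:ℕ)).take ((j:ℕ) - i)).sum := by
      rw [hsplit, List.sum_append]
    rw [heq] at this
    have h0 : ((M.drop (i:ℕ)).take ((j:ℕ) - i)).sum = 0 := by
      rwa [left_eq_add] at this
    rw [← h0, hM, List.map_take, List.map_drop]

lemma geom_sum_nat (q m : ℕ) (hq : 1 ≤ q) :
    ∑ j ∈ Finset.range m, (q - 1) * q ^ j = q ^ m - 1 := by
  induction m with
  | zero => simp
  | succ m ih =>
    rw [Finset.sum_range_succ, ih, pow_succ]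
    have h1 : 1 ≤ q ^ m := Nat.one_le_pow _ _ hq
    have h3 : (q - 1) * q ^ m = q ^ m * q - q ^ m := by
      rw [Nat.sub_mul, one_mul, mul_comm]
    have h4 : q ^ m ≤ q ^ m * q := Nat.le_mul_of_pos_right _ (by omega)
    omega

lemma sum_le_of_counts (q m : ℕ) (hq : 2 ≤ q) (M : Multiset ℕ)
    (hmem : ∀ x ∈ M, ∃ j, j < m ∧ x = q ^ j)
    (hcount : ∀ j, j < m → M.count (q ^ j) ≤ q - 1) :
    M.sum ≤ q ^ m - 1 := by
  classical
  set T : Multiset ℕ := ∑ j ∈ Finset.range m, Multiset.replicate (q - 1) (q ^ j) with hT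
  have hle : M ≤ T := by
    rw [Multiset.le_iff_count]
    intro x
    by_cases hx : x ∈ M
    · obtain ⟨j, hj, rfl⟩ := hmem x hx
      have hTc : T.count (q ^ j) = q - 1 := by
        rw [hT, Multiset.count_sum']
        rw [Finset.sum_eq_single j]
        · simp
        · intro b hb hbj
          rw [Multiset.count_replicate, if_neg]
          exact fun h => hbj (Nat.pow_right_injective hq h)
        · intro h; exact absurd (Finset.mem_range.mpr hj) h
      rw [hTc]; exact hcount j hj
    · rw [Multiset.count_eq_zero_of_notMem hx]; exact Nat.zero_le _
  have hmono : M.sum ≤ T.sum := by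
    obtain ⟨C, hC⟩ := Multiset.le_iff_exists_add.mp hle
    rw [hC, Multiset.sum_add]; exact Nat.le_add_right _ _
  calc M.sum ≤ T.sum := hmono
    _ = ∑ j ∈ Finset.range m, (q - 1) * q ^ j := by
        rw [hT]
        rw [show (Multiset.sum : Multiset ℕ → ℕ) = Multiset.sumAddMonoidHom from rfl]
        rw [map_sum]
        refine Finset.sum_congr rfl fun j _ => ?_
        show (Multiset.replicate (q-1) (q^j)).sum = _
        rw [Multiset.sum_replicate, smul_eq_mul]
    _ = q ^ m - 1 := geom_sum_nat q m (by omega)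

lemma zsf_W_le (q m : ℕ) (hq : q.Prime) (hm : 0 < m) :
    ∀ n (S : Multiset (ZMod (q ^ m))), S.card = n → IsZeroSumFree S →
      W (q ^ m) S ≤ q ^ m - 1 := by
  classical
  haveI : NeZero (q ^ m) := ⟨pow_ne_zero _ hq.pos.ne'⟩
  intro n
  induction n using Nat.strong_induction_on with
  | _ n IH =>
  intro S hcard hS
  subst hcard
  by_contra hWc
  push_neg at hWc
  have hNpos : 0 < q ^ m := Nat.pos_of_ne_zero (NeZero.ne _)
  have hWge : q ^ m ≤ W (q ^ m) S := by omega
  have hne0 : ∀ g ∈ S, g ≠ 0 := by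
    intro g hg h0
    exact hS {g} (Multiset.singleton_le.mpr hg) (by simp) (by simp [h0])
  have hlev : ∀ g ∈ S, ∃ j, j < m ∧ w (q ^ m) g = q ^ j := by
    intro g hg
    obtain ⟨j, hj, hw⟩ := (Nat.dvd_prime_pow hq).mp (w_dvd g)
    refine ⟨j, ?_, hw⟩
    rcases Nat.lt_or_ge j m with h | h
    · exact h
    · exfalso
      have hjm : j = m := le_antisymm hj h
      subst hjm
      have h1 : q ^ j ∣ g.val := (dvd_w_iff dvd_rfl g).mp (by rw [hw])
      have h2 : g.val < q ^ j := ZMod.val_lt g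
      exact hne0 g hg ((ZMod.val_eq_zero g).mp (Nat.eq_zero_of_dvd_of_lt h1 h2))
  -- pigeonhole: some weight level has at least q elements
  set M : Multiset ℕ := S.map (w (q ^ m)) with hM
  have hWM : M.sum = W (q ^ m) S := by rw [hM]; rfl
  have hmemM : ∀ x ∈ M, ∃ j, j < m ∧ x = q ^ j := by
    intro x hx
    obtain ⟨g, hg, rfl⟩ := Multiset.mem_map.mp hx
    obtain ⟨j, hj, hw⟩ := hlev g hg
    exact ⟨j, hj, hw⟩
  obtain ⟨j, hj, hcnt⟩ : ∃ j, j < m ∧ q ≤ M.count (q ^ j) := by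
    by_contra hcon
    push_neg at hcon
    have := sum_le_of_counts q m hq.two_le M hmemM
      (fun j hj => by have := hcon j hj; omega)
    omega
  have hj1m : j + 1 ≤ m := hj
  have hdpow : (q : ℕ) ^ j ∣ q ^ m := pow_dvd_pow q hj.le
  have hdpow1 : (q : ℕ) ^ (j + 1) ∣ q ^ m := pow_dvd_pow q hj1m
  -- the level-j elements
  set F : Multiset (ZMod (q ^ m)) := S.filter (fun g => q ^ j = w (q ^ m) g) with hF
  have hcntF : q ≤ Multiset.card F := by
    rw [hM, Multiset.count_map] at hcnt
    exact hcnt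
  have hFS : F ≤ S := Multiset.filter_le _ S
  have hlenL : (F.toList.take q).length = q := by
    rw [List.length_take, Multiset.length_toList]
    omega
  obtain ⟨U, hUsub, hUne, hUsum⟩ := davenport q hq.pos (F.toList.take q) hlenL
    (fun g => ((g.val / q ^ j : ℕ) : ZMod q))
  have hUsubF : U.Sublist F.toList := hUsub.trans (List.take_sublist _ _)
  have hUF : ∀ g ∈ U, g ∈ F := fun g hg => Multiset.mem_toList.mp (hUsubF.subset hg)
  have hwU : ∀ g ∈ U, w (q ^ m) g = q ^ j := by
    intro g hg
    exact (Multiset.of_mem_filter (hUF g hg)).symm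
  have hUS : (↑U : Multiset (ZMod (q ^ m))) ≤ S := by
    calc (↑U : Multiset (ZMod (q ^ m))) ≤ ↑F.toList :=
          Multiset.coe_le.mpr hUsubF.subperm
      _ = F := Multiset.coe_toList F
      _ ≤ S := hFS
  have hdvdval : ∀ g ∈ U, q ^ j ∣ g.val := by
    intro g hg
    exact (dvd_w_iff hdpow g).mp ((hwU g hg) ▸ dvd_rfl)
  set Sv : ℕ := (U.map (fun g => g.val)).sum with hSv
  have hqdvd : q ∣ (U.map (fun g => g.val / q ^ j)).sum := by
    rw [← ZMod.natCast_eq_zero_iff]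
    rw [Nat.cast_list_sum, List.map_map]
    exact hUsum
  have hSvdvd : q ^ (j + 1) ∣ Sv := by
    have hmapeq : U.map (fun g => (g.val : ℕ)) =
        U.map (fun g => q ^ j * (g.val / q ^ j)) := by
      refine List.map_congr_left (fun g hg => ?_)
      exact (Nat.mul_div_cancel' (hdvdval g hg)).symm
    rw [hSv, hmapeq]
    have : (U.map (fun g => q ^ j * (g.val / q ^ j))).sum
        = q ^ j * (U.map (fun g => g.val / q ^ j)).sum := by
      rw [← List.sum_map_mul_left]
    rw [this, pow_succ]
    exact Nat.mul_dvd_mul dvd_rfl hqdvd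
  set u : ZMod (q ^ m) := ((Sv : ℕ) : ZMod (q ^ m)) with hu
  have hu_sum : (↑U : Multiset (ZMod (q ^ m))).sum = u := by
    rw [Multiset.sum_coe, hu, hSv, Nat.cast_list_sum, List.map_map]
    have hmc : U.map ((fun (a : ℕ) => (a : ZMod (q ^ m))) ∘ fun g => g.val) = U.map id :=
      List.map_congr_left fun g _ => ZMod.natCast_zmod_val g
    rw [hmc, List.map_id]
  have hUne0 : (↑U : Multiset (ZMod (q ^ m))) ≠ 0 := by
    simpa [Multiset.coe_eq_zero] using hUne
  have hu0 : u ≠ 0 := by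
    intro h
    exact hS ↑U hUS hUne0 (hu_sum.trans h)
  have huval : q ^ (j + 1) ∣ u.val := by
    have hmd := Nat.mod_add_div Sv (q ^ m)
    have hdd : q ^ (j + 1) ∣ q ^ m * (Sv / q ^ m) := hdpow1.mul_right _
    have heq : Sv % q ^ m = Sv - q ^ m * (Sv / q ^ m) := Nat.eq_sub_of_add_eq hmd
    rw [hu, ZMod.val_natCast, heq]
    exact Nat.dvd_sub hSvdvd hdd
  have hwu : q ^ (j + 1) ≤ w (q ^ m) u :=
    Nat.le_of_dvd (w_pos u) ((dvd_w_iff hdpow1 u).mpr huval)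
  have hlen1 : 1 ≤ U.length := List.length_pos_iff.mpr hUne
  have hlen2 : 2 ≤ U.length := by
    rcases Nat.lt_or_ge U.length 2 with h | h
    · exfalso
      have h1 : U.length = 1 := by omega
      obtain ⟨g, rfl⟩ := List.length_eq_one_iff.mp h1
      have hgU : g ∈ [g] := List.mem_singleton_self g
      have hSvg : Sv = g.val := by simp [hSv]
      have : q ^ (j + 1) ∣ w (q ^ m) g := (dvd_w_iff hdpow1 g).mpr (hSvg ▸ hSvdvd)
      rw [hwU g hgU] at this
      have := Nat.le_of_dvd (Nat.pow_pos hq.pos) this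
      have hlt : q ^ j < q ^ (j + 1) :=
        Nat.pow_lt_pow_right hq.one_lt (Nat.lt_succ_self j)
      omega
    · exact h
  have hlenq : U.length ≤ q := by
    have := hUsub.length_le
    rwa [hlenL] at this
  have hWU : W (q ^ m) ↑U = U.length * q ^ j := by
    rw [W, Multiset.map_coe, Multiset.sum_coe]
    have : U.map (w (q ^ m)) = U.map (fun _ => q ^ j) :=
      List.map_congr_left fun g hg => hwU g hg
    rw [this, List.map_const', List.sum_replicate, smul_eq_mul]
  -- the new shorter sequence
  set S' : Multiset (ZMod (q ^ m)) := u ::ₘ (S - (↑U : Multiset (ZMod (q ^ m)))) with hS'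
  have hUcard : Multiset.card (↑U : Multiset (ZMod (q ^ m))) = U.length :=
    Multiset.coe_card U
  have hUcardS : U.length ≤ Multiset.card S := by
    have := Multiset.card_le_card hUS
    rwa [hUcard] at this
  have hsubadd : (S - (↑U : Multiset (ZMod (q ^ m)))) + ↑U = S := tsub_add_cancel_of_le hUS
  have hcardsub : Multiset.card (S - (↑U : Multiset (ZMod (q ^ m)))) = Multiset.card S - U.length := by
    have := congrArg Multiset.card hsubadd
    rw [Multiset.card_add, hUcard] at this
    omega
  have hcard' : Multiset.card S' < Multiset.card S := by
    rw [hS', Multiset.card_cons, hcardsub]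
    omega
  have hWsplit : W (q ^ m) S = W (q ^ m) (S - (↑U : Multiset (ZMod (q ^ m)))) + W (q ^ m) ↑U := by
    rw [← W_add, hsubadd]
  have hW' : q ^ m ≤ W (q ^ m) S' := by
    rw [hS', W_cons]
    have h1 : U.length * q ^ j ≤ q * q ^ j :=
      Nat.mul_le_mul_right _ hlenq
    have h2 : q * q ^ j = q ^ (j + 1) := by rw [pow_succ, mul_comm]
    omega
  have hzsf' : IsZeroSumFree S' := by
    intro T hT hT0 hTsum
    have hT' : T ≤ (S - (↑U : Multiset (ZMod (q ^ m)))) + {u} := by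
      rwa [add_comm, Multiset.singleton_add, ← hS']
    have hT2 : T - (S - (↑U : Multiset (ZMod (q ^ m)))) ≤ {u} := tsub_le_iff_left.mpr hT'
    have hT1 : T ∩ (S - (↑U : Multiset (ZMod (q ^ m)))) ≤ S - (↑U : Multiset (ZMod (q ^ m))) := Multiset.inter_le_right
    have hdecomp : T = T ∩ (S - (↑U : Multiset (ZMod (q ^ m)))) + (T - (S - (↑U : Multiset (ZMod (q ^ m))))) := by
      ext a
      simp only [Multiset.count_add, Multiset.count_inter, Multiset.count_sub]
      omega
    rcases Multiset.le_singleton.mp hT2 with h2 | h2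
    · rw [h2, add_zero] at hdecomp
      refine hS T ?_ hT0 hTsum
      calc T = T ∩ (S - (↑U : Multiset (ZMod (q ^ m)))) := hdecomp
        _ ≤ S - (↑U : Multiset (ZMod (q ^ m))) := hT1
        _ ≤ S := tsub_le_self
    · have hsum' : T.sum = (T ∩ (S - (↑U : Multiset (ZMod (q ^ m))))).sum + u := by
        conv_lhs => rw [hdecomp]
        rw [h2, Multiset.sum_add, Multiset.sum_singleton]
      refine hS ((T ∩ (S - (↑U : Multiset (ZMod (q ^ m))))) + (↑U : Multiset (ZMod (q ^ m)))) ?_ ?_ ?_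
      · calc (T ∩ (S - (↑U : Multiset (ZMod (q ^ m))))) + (↑U : Multiset (ZMod (q ^ m))) ≤ (S - (↑U : Multiset (ZMod (q ^ m)))) + (↑U : Multiset (ZMod (q ^ m))) := add_le_add_left hT1 _
          _ = S := hsubadd
      · intro h0
        have hc := congrArg Multiset.card h0
        rw [Multiset.card_add, Multiset.card_zero] at hc
        exact hUne0 (Multiset.card_eq_zero.mp (by omega))
      · rw [Multiset.sum_add, hu_sum, ← hsum', hTsum]
  have := IH (Multiset.card S') hcard' S' rfl hzsf'
  omega

lemma exists_zero_sum (q m : ℕ) (hq : q.Prime) (hm : 0 < m) :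
    ∀ n (S : Multiset (ZMod (q ^ m))), S.card = n → q ^ m ≤ W (q ^ m) S →
      ∃ T, T ≤ S ∧ T ≠ 0 ∧ T.sum = 0 ∧ W (q ^ m) T ≤ q ^ m := by
  classical
  haveI : NeZero (q ^ m) := ⟨pow_ne_zero _ hq.pos.ne'⟩
  intro n
  induction n using Nat.strong_induction_on with
  | _ n IH =>
  intro S hcard hW
  subst hcard
  by_cases hex : ∃ g ∈ S, q ^ m ≤ W (q ^ m) (S.erase g)
  · obtain ⟨g, hg, hWe⟩ := hex
    have hlt : Multiset.card (S.erase g) < Multiset.card S :=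
      Multiset.card_erase_lt_of_mem hg
    obtain ⟨T, hT, hT0, hTs, hTW⟩ := IH _ hlt (S.erase g) rfl hWe
    exact ⟨T, hT.trans (Multiset.erase_le g S), hT0, hTs, hTW⟩
  · push_neg at hex
    have hNpos : 0 < q ^ m := Nat.pos_of_ne_zero (NeZero.ne _)
    have hS0 : S ≠ 0 := by
      intro h
      rw [h] at hW
      have h0 : W (q ^ m) (0 : Multiset (ZMod (q ^ m))) = 0 := rfl
      omega
    obtain ⟨g₀, hg₀, hmin⟩ := Finset.exists_min_image S.toFinset (w (q ^ m))
      (Multiset.toFinset_nonempty.mpr hS0)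
    rw [Multiset.mem_toFinset] at hg₀
    obtain ⟨e₀, he₀m, hwe₀⟩ := (Nat.dvd_prime_pow hq).mp (w_dvd g₀)
    have hdvdall : ∀ x ∈ S.map (w (q ^ m)), q ^ e₀ ∣ x := by
      intro x hx
      obtain ⟨g, hg, rfl⟩ := Multiset.mem_map.mp hx
      obtain ⟨e, hem, hwe⟩ := (Nat.dvd_prime_pow hq).mp (w_dvd g)
      have hle : w (q ^ m) g₀ ≤ w (q ^ m) g := hmin g (Multiset.mem_toFinset.mpr hg)
      rw [hwe₀, hwe] at hle
      rw [hwe]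
      exact pow_dvd_pow q ((Nat.pow_le_pow_iff_right hq.one_lt).mp hle)
    have hdW : q ^ e₀ ∣ W (q ^ m) S := Multiset.dvd_sum hdvdall
    have hdN : q ^ e₀ ∣ q ^ m := pow_dvd_pow q he₀m
    have hWer := hex g₀ hg₀
    have hsplit : W (q ^ m) S = w (q ^ m) g₀ + W (q ^ m) (S.erase g₀) := by
      conv_lhs => rw [← Multiset.cons_erase hg₀]
      rw [W_cons]
    have hwle : w (q ^ m) g₀ ≤ q ^ e₀ := le_of_eq hwe₀
    have hWlt : W (q ^ m) S < q ^ m + q ^ e₀ := by omega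
    have hWeq : W (q ^ m) S = q ^ m := by
      have hd : q ^ e₀ ∣ W (q ^ m) S - q ^ m := Nat.dvd_sub hdW hdN
      have hpos : 0 < q ^ e₀ := Nat.pow_pos hq.pos
      rcases Nat.eq_zero_or_pos (W (q ^ m) S - q ^ m) with h | h
      · omega
      · have := Nat.le_of_dvd h hd
        omega
    have hnz : ¬ IsZeroSumFree S := by
      intro hzsf
      have := zsf_W_le q m hq hm (Multiset.card S) S rfl hzsf
      omega
    rw [IsZeroSumFree] at hnz
    push_neg at hnz
    obtain ⟨T, hT, hT0, hTs⟩ := hnz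
    refine ⟨T, hT, hT0, hTs, ?_⟩
    calc W (q ^ m) T ≤ W (q ^ m) S := W_le_of_le hT
      _ = q ^ m := hWeq

lemma crossNum_nonneg [NeZero N] (S : Multiset (ZMod N)) : 0 ≤ crossNum S := by
  rw [crossNum_eq]
  positivity

lemma one_le_crossNum_iff [NeZero N] (S : Multiset (ZMod N)) :
    1 ≤ crossNum S ↔ N ≤ W N S := by
  have hN : (0:ℝ) < N := by exact_mod_cast Nat.pos_of_ne_zero (NeZero.ne N)
  rw [crossNum_eq, one_le_div hN, Nat.cast_le]

lemma crossNum_le_one_iff [NeZero N] (S : Multiset (ZMod N)) :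
    crossNum S ≤ 1 ↔ W N S ≤ N := by
  have hN : (0:ℝ) < N := by exact_mod_cast Nat.pos_of_ne_zero (NeZero.ne N)
  rw [crossNum_eq, div_le_one hN, Nat.cast_le]

lemma crossNum_add {G : Type*} [AddCommGroup G] (A B : Multiset G) :
    crossNum (A + B) = crossNum A + crossNum B := by
  simp [crossNum]

end ZSFAux

open ZSFAux in

/-- Over `C_{q^m}` (`q` prime, `m ≥ 1`), every sequence `S` contains at least
`⌊k(S)⌋` pairwise disjoint nonempty zero-sum subsequences; in particular every
sequence `S` with `k(S) ≥ 1` has a nonempty zero-sum subsequence `T` with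
`k(T) ≤ 1`. -/
theorem zmod_prime_pow_disjoint_zero_sum_subsequences
    (q : ℕ) (hq : q.Prime) (m : ℕ) (hm : 0 < m) (S : Multiset (ZMod (q ^ m))) :
    (∃ L : List (Multiset (ZMod (q ^ m))),
        (⌊crossNum S⌋).toNat ≤ L.length ∧ L.sum ≤ S ∧
          ∀ T ∈ L, T ≠ 0 ∧ T.sum = 0) ∧
      (1 ≤ crossNum S →
        ∃ T : Multiset (ZMod (q ^ m)), T ≤ S ∧ T ≠ 0 ∧ T.sum = 0 ∧ crossNum T ≤ 1) := by
  classical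
  haveI : NeZero (q ^ m) := ⟨pow_ne_zero _ hq.pos.ne'⟩
  have key : ∀ S : Multiset (ZMod (q ^ m)), 1 ≤ crossNum S →
      ∃ T, T ≤ S ∧ T ≠ 0 ∧ T.sum = 0 ∧ crossNum T ≤ 1 := by
    intro S hS1
    have hW : q ^ m ≤ W (q ^ m) S := (one_le_crossNum_iff S).mp hS1
    obtain ⟨T, h1, h2, h3, h4⟩ := exists_zero_sum q m hq hm (Multiset.card S) S rfl hW
    exact ⟨T, h1, h2, h3, (crossNum_le_one_iff T).mpr h4⟩
  constructor
  · have main : ∀ (n : ℕ) (S : Multiset (ZMod (q ^ m))), (n : ℝ) ≤ crossNum S →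
        ∃ L : List (Multiset (ZMod (q ^ m))), n ≤ L.length ∧ L.sum ≤ S ∧
          ∀ T ∈ L, T ≠ 0 ∧ T.sum = 0 := by
      intro n
      induction n with
      | zero =>
        intro S _
        exact ⟨[], by simp, by simp, by simp⟩
      | succ k ih =>
        intro S hn
        have h1 : 1 ≤ crossNum S := by
          have hk1 : (1:ℝ) ≤ ((k + 1 : ℕ) : ℝ) := by
            exact_mod_cast Nat.succ_le_succ (Nat.zero_le k)
          linarith
        obtain ⟨T, hTS, hT0, hTs, hT1⟩ := key S h1
        have hsumid : (S - T) + T = S := tsub_add_cancel_of_le hTS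
        have hsub : crossNum (S - T) = crossNum S - crossNum T := by
          have h := crossNum_add (S - T) T
          rw [hsumid] at h
          linarith
        have hk : (k : ℝ) ≤ crossNum (S - T) := by
          rw [hsub]
          push_cast at hn
          linarith
        obtain ⟨L, hL1, hL2, hL3⟩ := ih (S - T) hk
        refine ⟨T :: L, by simpa using Nat.succ_le_succ hL1, ?_, ?_⟩
        · rw [List.sum_cons]
          calc T + L.sum ≤ T + (S - T) := add_le_add_right hL2 T
            _ = S := by rw [add_comm]; exact hsumid
        · intro T' hT'
          rcases List.mem_cons.mp hT' with h | h
          · rw [h]; exact ⟨hT0, hTs⟩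
          · exact hL3 T' h
    refine main (⌊crossNum S⌋).toNat S ?_
    have hnn : 0 ≤ crossNum S := crossNum_nonneg S
    rcases le_or_gt 0 ⌊crossNum S⌋ with h | h
    · calc ((⌊crossNum S⌋.toNat : ℕ) : ℝ) = ((⌊crossNum S⌋ : ℤ) : ℝ) := by
            exact_mod_cast congrArg (fun z : ℤ => (z : ℝ)) (Int.toNat_of_nonneg h)
        _ ≤ crossNum S := Int.floor_le _
    · rw [Int.toNat_of_nonpos h.le]
      simpa using hnn
  · exact key S
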